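/- Let E ⊆ ℝ^n be a Lebesgue-measurable set and f : E → ℝ^m a measurable mapping that is approximately differentiable at almost every point of E. Then there is a sequence of pairwise disjoint measurable sets Q₁, Q₂, … with λ(E \ ⋃_{i≥1} Q_i) = 0 such that every restriction f|_{Q_i} is a Lipschitz mapping. -/

import Mathlib

open MeasureTheory Metric Filter Set Function
open scoped Topology ENNReal NNReal

/-- `Y` has density `d` at the point `x` with respect to the measure `μ`. -/
def HasDensityAt {X : Type*} [PseudoMetricSpace X] [MeasurableSpace X]
    (μ : Measure X) (Y : Set X) (x : X) (d : ℝ≥0∞) : Prop :=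
  Tendsto (fun r : ℝ => μ (Y ∩ ball x r) / μ (ball x r)) (𝓝[>] (0 : ℝ)) (𝓝 d)

/-- `L` is an approximate differential of `f` (as a map defined on `E`) at `a`. -/
def IsApproxDifferential {n m : ℕ} (E : Set (EuclideanSpace ℝ (Fin n)))
    (f : EuclideanSpace ℝ (Fin n) → EuclideanSpace ℝ (Fin m))
    (a : EuclideanSpace ℝ (Fin n))
    (L : EuclideanSpace ℝ (Fin n) →ₗ[ℝ] EuclideanSpace ℝ (Fin m)) : Prop :=
  ∀ ε : ℝ, 0 < ε →
    HasDensityAt volume {x ∈ E | ε * ‖x - a‖ < ‖f x - f a - L (x - a)‖} a 0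

set_option maxHeartbeats 1000000

/-- A measurable mapping that is approximately differentiable a.e. in `E` decomposes
`E`, up to a null set, into countably many disjoint measurable sets on each of which
it is Lipschitz. -/
theorem lipschitz_decomposition_of_approx_differentiable {n m : ℕ}
    (E : Set (EuclideanSpace ℝ (Fin n))) (hE : MeasurableSet E)
    (f : EuclideanSpace ℝ (Fin n) → EuclideanSpace ℝ (Fin m))
    (hf : Measurable (fun x : E => f x))
    (hap : ∀ᵐ a ∂volume, a ∈ E →
      ∃ L : EuclideanSpace ℝ (Fin n) →ₗ[ℝ] EuclideanSpace ℝ (Fin m),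
        IsApproxDifferential E f a L) :
    ∃ Q : ℕ → Set (EuclideanSpace ℝ (Fin n)),
      Pairwise (Disjoint on Q) ∧ (∀ i, MeasurableSet (Q i)) ∧
      volume (E \ ⋃ i, Q i) = 0 ∧
      ∀ i : ℕ, ∃ C : ℝ≥0, LipschitzOnWith C f (Q i) := by
  classical
  -- a globally measurable function agreeing with `f` on `E`
  obtain ⟨F, hFm, hFf⟩ : ∃ F : EuclideanSpace ℝ (Fin n) → EuclideanSpace ℝ (Fin m),
      Measurable F ∧ ∀ x ∈ E, F x = f x := by
    obtain ⟨F, hFm, hFeq⟩ := (MeasurableEmbedding.subtype_coe hE).exists_measurable_extend hf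
      (fun _ => ⟨0⟩)
    exact ⟨F, hFm, fun x hx => congrFun hFeq ⟨x, hx⟩⟩
  set d := Module.finrank ℝ (EuclideanSpace ℝ (Fin n)) with hdd
  set δ : ℝ≥0∞ := ((8 : ℝ≥0∞) * 3 ^ d)⁻¹ with hδdef
  have h83 : ((8 : ℝ≥0∞) * 3 ^ d) ≠ 0 :=
    mul_ne_zero (by norm_num) (pow_ne_zero _ (by norm_num))
  have h83t : ((8 : ℝ≥0∞) * 3 ^ d) ≠ ∞ :=
    ENNReal.mul_ne_top (by norm_num) (ENNReal.pow_ne_top (by norm_num))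
  have hδ0 : 0 < δ := ENNReal.inv_pos.mpr h83t
  have hδtop : δ ≠ ∞ := ENNReal.inv_ne_top.mpr h83
  have hδ1 : δ ≤ 1 := by
    rw [hδdef]
    refine ENNReal.inv_le_one.mpr ?_
    calc (1 : ℝ≥0∞) = 1 * 1 := by norm_num
    _ ≤ 8 * 3 ^ d := by gcongr <;> [norm_num; exact one_le_pow_of_one_le' (by norm_num) d]
  have hδ2 : δ / 2 ≤ 1 := le_trans ENNReal.half_le_self hδ1
  have hδhalf : (0 : ℝ≥0∞) < δ / 2 := ENNReal.div_pos hδ0.ne' (by norm_num)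
  have hδ3 : δ * (3 : ℝ≥0∞) ^ d = 8⁻¹ := by
    rw [hδdef, ENNReal.mul_inv (Or.inl (by norm_num)) (Or.inl (by norm_num)), mul_assoc,
      ENNReal.inv_mul_cancel (pow_ne_zero _ (by norm_num)) (ENNReal.pow_ne_top (by norm_num)),
      mul_one]
  set Good : ℕ → EuclideanSpace ℝ (Fin n) → Set (EuclideanSpace ℝ (Fin n)) :=
    fun K a => {x | x ∈ E ∧ ‖F x - F a‖ ≤ (K : ℝ) * ‖x - a‖} with hGooddef
  set G : ℕ → ℕ → Set (EuclideanSpace ℝ (Fin n)) := fun K j =>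
    E ∩ {a | ∀ q : ℚ, 0 < (q : ℝ) → (q : ℝ) ≤ 1 / ((j : ℝ) + 1) →
      volume (ball a (q : ℝ) \ Good K a) ≤ δ * volume (ball a (q : ℝ))} with hGdef
  have hBd : ∀ (a : EuclideanSpace ℝ (Fin n)) {r : ℝ}, 0 < r →
      volume (closedBall a r) = volume (ball a r) := by
    intro a r hr
    rw [Measure.addHaar_closedBall volume a hr.le, Measure.addHaar_ball_of_pos volume a hr]
  -- measurability of the pieces
  have hGmeas : ∀ K j, MeasurableSet (G K j) := by
    intro K j
    refine hE.inter ?_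
    have hrw : {a : EuclideanSpace ℝ (Fin n) | ∀ q : ℚ, 0 < (q : ℝ) → (q : ℝ) ≤ 1 / ((j : ℝ) + 1) →
        volume (ball a (q : ℝ) \ Good K a) ≤ δ * volume (ball a (q : ℝ))}
        = ⋂ (q : ℚ) (_ : 0 < (q : ℝ)) (_ : (q : ℝ) ≤ 1 / ((j : ℝ) + 1)),
          {a | volume (ball a (q : ℝ) \ Good K a) ≤ δ * volume (ball a (q : ℝ))} := by
      ext a; simp only [mem_setOf_eq, mem_iInter]
    rw [hrw]
    refine MeasurableSet.iInter fun q => MeasurableSet.iInter fun hq =>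
      MeasurableSet.iInter fun _ => ?_
    have hS : MeasurableSet {p : EuclideanSpace ℝ (Fin n) × EuclideanSpace ℝ (Fin n) |
        dist p.2 p.1 < (q : ℝ) ∧ ¬ (p.2 ∈ E ∧ ‖F p.2 - F p.1‖ ≤ (K : ℝ) * ‖p.2 - p.1‖)} := by
      refine MeasurableSet.inter ?_ (MeasurableSet.compl ?_)
      · exact measurableSet_lt (measurable_snd.dist measurable_fst) measurable_const
      · refine MeasurableSet.inter (measurable_snd hE) ?_
        exact measurableSet_le ((hFm.comp measurable_snd).sub (hFm.comp measurable_fst)).norm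
          (measurable_const.mul (measurable_snd.sub measurable_fst).norm)
    have hpre : ∀ a : EuclideanSpace ℝ (Fin n), ball a (q : ℝ) \ Good K a =
        Prod.mk a ⁻¹'
          {p : EuclideanSpace ℝ (Fin n) × EuclideanSpace ℝ (Fin n) |
            dist p.2 p.1 < (q : ℝ) ∧ ¬ (p.2 ∈ E ∧ ‖F p.2 - F p.1‖ ≤ (K : ℝ) * ‖p.2 - p.1‖)} := by
      intro a
      ext x
      simp only [hGooddef, mem_diff, mem_ball, mem_preimage, mem_setOf_eq]
    have hmeasfun : Measurable fun a => volume (ball a (q : ℝ) \ Good K a) := by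
      simp only [hpre]
      exact measurable_measure_prodMk_left hS
    have hconst : (fun a : EuclideanSpace ℝ (Fin n) => δ * volume (ball a (q : ℝ)))
        = fun _ => δ * volume (ball (0 : EuclideanSpace ℝ (Fin n)) (q : ℝ)) := by
      funext a; rw [Measure.addHaar_ball_center]
    refine measurableSet_le hmeasfun ?_
    rw [hconst]
    exact measurable_const
  -- almost every point of `E` lies in some `G K j`
  have hcov : ∀ᵐ a ∂(volume : Measure (EuclideanSpace ℝ (Fin n))), a ∈ E → ∃ K j, a ∈ G K j := by
    filter_upwards [hap, Besicovitch.ae_tendsto_measure_inter_div_of_measurableSet volume hE]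
      with a ha hda haE
    obtain ⟨L, hL⟩ := ha haE
    set Lc := LinearMap.toContinuousLinearMap L with hLc
    set K : ℕ := ⌈1 + ‖Lc‖⌉₊ with hK
    have hKge : 1 + ‖Lc‖ ≤ (K : ℝ) := Nat.le_ceil _
    have hbad := hL 1 one_pos
    have h1 : ∀ᶠ r in 𝓝[>] (0 : ℝ),
        volume ({x ∈ E | 1 * ‖x - a‖ < ‖f x - f a - L (x - a)‖} ∩ ball a r)
          / volume (ball a r) < δ / 2 :=
      hbad.eventually (gt_mem_nhds hδhalf)
    have hda' : Tendsto (fun r => volume (E ∩ closedBall a r) / volume (closedBall a r))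
        (𝓝[>] (0 : ℝ)) (𝓝 1) := by
      have := hda
      rwa [indicator_of_mem haE, Pi.one_apply] at this
    have hlt1 : (1 : ℝ≥0∞) - δ / 2 < 1 :=
      ENNReal.sub_lt_self (by norm_num) (by norm_num) hδhalf.ne'
    have h2 : ∀ᶠ r in 𝓝[>] (0 : ℝ),
        1 - δ / 2 < volume (E ∩ closedBall a r) / volume (closedBall a r) :=
      hda'.eventually (lt_mem_nhds hlt1)
    obtain ⟨r0, hr0, hsub⟩ := mem_nhdsGT_iff_exists_Ioo_subset.mp (h1.and h2)
    obtain ⟨j, hj⟩ := exists_nat_one_div_lt (mem_Ioi.mp hr0)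
    refine ⟨K, j, haE, fun q hq hq' => ?_⟩
    have hqr0 : (q : ℝ) ∈ Ioo (0 : ℝ) r0 := ⟨hq, lt_of_le_of_lt hq' hj⟩
    obtain ⟨hb1, hb2⟩ := hsub hqr0
    have hv0 : volume (ball a (q : ℝ)) ≠ 0 := (measure_ball_pos volume a hq).ne'
    have hvt : volume (ball a (q : ℝ)) ≠ ∞ := measure_ball_lt_top.ne
    have hcb0 : volume (closedBall a (q : ℝ)) ≠ 0 := by rw [hBd a hq]; exact hv0
    have hcbt : volume (closedBall a (q : ℝ)) ≠ ∞ := measure_closedBall_lt_top.ne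
    -- bound on the bad set coming from approximate differentiability
    have hbad' : volume ({x ∈ E | 1 * ‖x - a‖ < ‖f x - f a - L (x - a)‖} ∩ ball a (q : ℝ))
        ≤ δ / 2 * volume (ball a (q : ℝ)) :=
      le_of_lt ((ENNReal.div_lt_iff (Or.inl hv0) (Or.inl hvt)).mp hb1)
    -- bound on the complement of `E`
    have hE' : (1 - δ / 2) * volume (closedBall a (q : ℝ)) ≤ volume (E ∩ closedBall a (q : ℝ)) :=
      le_of_lt ((ENNReal.lt_div_iff_mul_lt (Or.inl hcb0) (Or.inl hcbt)).mp hb2)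
    have hEc : volume (closedBall a (q : ℝ) \ E) ≤ δ / 2 * volume (closedBall a (q : ℝ)) := by
      have hadd : volume (closedBall a (q : ℝ) \ E) + volume (closedBall a (q : ℝ) ∩ E)
          = volume (closedBall a (q : ℝ)) := measure_diff_add_inter _ hE
      have hsplit : volume (closedBall a (q : ℝ))
          = δ / 2 * volume (closedBall a (q : ℝ)) + (1 - δ / 2) * volume (closedBall a (q : ℝ)) := by
        rw [← add_mul, add_comm, tsub_add_cancel_of_le hδ2, one_mul]
      have hle : volume (closedBall a (q : ℝ) \ E) + (1 - δ / 2) * volume (closedBall a (q : ℝ))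
          ≤ δ / 2 * volume (closedBall a (q : ℝ)) + (1 - δ / 2) * volume (closedBall a (q : ℝ)) := by
        calc volume (closedBall a (q : ℝ) \ E) + (1 - δ / 2) * volume (closedBall a (q : ℝ))
            ≤ volume (closedBall a (q : ℝ) \ E) + volume (E ∩ closedBall a (q : ℝ)) := by
              gcongr
          _ = volume (closedBall a (q : ℝ)) := by rw [inter_comm]; exact hadd
          _ = _ := hsplit
      have hcne : (1 - δ / 2) * volume (closedBall a (q : ℝ)) ≠ ∞ :=
        ENNReal.mul_ne_top (ne_top_of_le_ne_top ENNReal.one_ne_top tsub_le_self) hcbt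
      exact (WithTop.add_le_add_iff_right hcne).mp hle
    -- combine
    have hsubset : ball a (q : ℝ) \ Good K a ⊆
        ({x ∈ E | 1 * ‖x - a‖ < ‖f x - f a - L (x - a)‖} ∩ ball a (q : ℝ))
          ∪ (closedBall a (q : ℝ) \ E) := by
      rintro x ⟨hxb, hxg⟩
      by_cases hxE : x ∈ E
      · left
        refine ⟨⟨hxE, ?_⟩, hxb⟩
        have hnot : ¬ ‖F x - F a‖ ≤ (K : ℝ) * ‖x - a‖ := fun h => hxg ⟨hxE, h⟩
        push_neg at hnot
        rw [hFf x hxE, hFf a haE] at hnot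
        have hLb : ‖L (x - a)‖ ≤ ‖Lc‖ * ‖x - a‖ := by
          have := Lc.le_opNorm (x - a)
          rwa [hLc, LinearMap.coe_toContinuousLinearMap'] at this
        have htri : ‖f x - f a‖ - ‖L (x - a)‖ ≤ ‖f x - f a - L (x - a)‖ :=
          norm_sub_norm_le _ _
        have hnn : (0 : ℝ) ≤ ‖x - a‖ := norm_nonneg _
        nlinarith [norm_nonneg (f x - f a - L (x - a))]
      · right
        exact ⟨ball_subset_closedBall hxb, hxE⟩
    calc volume (ball a (q : ℝ) \ Good K a)
        ≤ volume (({x ∈ E | 1 * ‖x - a‖ < ‖f x - f a - L (x - a)‖} ∩ ball a (q : ℝ))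
            ∪ (closedBall a (q : ℝ) \ E)) := measure_mono hsubset
      _ ≤ volume ({x ∈ E | 1 * ‖x - a‖ < ‖f x - f a - L (x - a)‖} ∩ ball a (q : ℝ))
            + volume (closedBall a (q : ℝ) \ E) := measure_union_le _ _
      _ ≤ δ / 2 * volume (ball a (q : ℝ)) + δ / 2 * volume (closedBall a (q : ℝ)) := by
          gcongr
      _ = δ / 2 * volume (ball a (q : ℝ)) + δ / 2 * volume (ball a (q : ℝ)) := by
          rw [hBd a hq]
      _ = δ * volume (ball a (q : ℝ)) := by
          rw [← add_mul, ENNReal.add_halves]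
  -- the Lipschitz estimate on small pieces of `G K j`
  have hLip : ∀ K j, ∀ x ∈ G K j, ∀ y ∈ G K j, dist x y ≤ 1 / (3 * ((j : ℝ) + 1)) →
      dist (f x) (f y) ≤ 3 * K * dist x y := by
    intro K j x hx y hy hxy
    rcases eq_or_ne x y with rfl | hne
    · simp
    have hr : 0 < dist x y := dist_pos.mpr hne
    have hj1 : (0 : ℝ) < (j : ℝ) + 1 := by positivity
    obtain ⟨q, hq1, hq2⟩ := exists_rat_btwn (by linarith : 2 * dist x y < 3 * dist x y)
    have hq0 : 0 < (q : ℝ) := by linarith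
    have hqle : (q : ℝ) ≤ 1 / ((j : ℝ) + 1) := by
      have h3 : 3 * dist x y ≤ 3 * (1 / (3 * ((j : ℝ) + 1))) := by linarith
      have : 3 * (1 / (3 * ((j : ℝ) + 1))) = 1 / ((j : ℝ) + 1) := by
        field_simp
      linarith
    set c := midpoint ℝ x y with hc
    have h2n : ‖(2 : ℝ)‖⁻¹ = (2 : ℝ)⁻¹ := by rw [Real.norm_ofNat]
    have hcx : dist c x = dist x y / 2 := by
      rw [hc, dist_midpoint_left, h2n]; ring
    have hcy : dist c y = dist x y / 2 := by
      rw [hc, dist_midpoint_right, h2n]; ring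
    have hballx : ball c (dist x y) ⊆ ball x (q : ℝ) := by
      intro z hz
      rw [mem_ball] at hz ⊢
      have := dist_triangle z c x
      linarith
    have hbally : ball c (dist x y) ⊆ ball y (q : ℝ) := by
      intro z hz
      rw [mem_ball] at hz ⊢
      have := dist_triangle z c y
      linarith
    have hx' := hx.2 q hq0 hqle
    have hy' := hy.2 q hq0 hqle
    have hq3 : ∀ w : EuclideanSpace ℝ (Fin n),
        volume (ball w (q : ℝ)) ≤ 3 ^ d * volume (ball c (dist x y)) := by
      intro w
      rw [Measure.addHaar_ball_of_pos volume w hq0, Measure.addHaar_ball_of_pos volume c hr,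
        ← mul_assoc]
      refine mul_le_mul_left ?_ _
      calc ENNReal.ofReal ((q : ℝ) ^ d) ≤ ENNReal.ofReal ((3 * dist x y) ^ d) := by
            refine ENNReal.ofReal_le_ofReal (pow_le_pow_left₀ hq0.le hq2.le d)
        _ = 3 ^ d * ENNReal.ofReal (dist x y ^ d) := by
            rw [mul_pow, ENNReal.ofReal_mul (by positivity), ENNReal.ofReal_pow (by norm_num),
              ENNReal.ofReal_ofNat]
    have hcover : ball c (dist x y) ⊆ (Good K x ∩ Good K y ∩ ball c (dist x y))
        ∪ ((ball x (q : ℝ) \ Good K x) ∪ (ball y (q : ℝ) \ Good K y)) := by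
      intro z hz
      by_cases h1 : z ∈ Good K x
      · by_cases h2 : z ∈ Good K y
        · exact Or.inl ⟨⟨h1, h2⟩, hz⟩
        · exact Or.inr (Or.inr ⟨hbally hz, h2⟩)
      · exact Or.inr (Or.inl ⟨hballx hz, h1⟩)
    have hvc0 : volume (ball c (dist x y)) ≠ 0 := (measure_ball_pos volume c hr).ne'
    have hvct : volume (ball c (dist x y)) ≠ ∞ := measure_ball_lt_top.ne
    have hmain : (Good K x ∩ Good K y ∩ ball c (dist x y)).Nonempty := by
      by_contra h
      rw [not_nonempty_iff_eq_empty] at h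
      have hbig : volume (ball c (dist x y)) ≤ 4⁻¹ * volume (ball c (dist x y)) := by
        calc volume (ball c (dist x y))
            ≤ volume ((Good K x ∩ Good K y ∩ ball c (dist x y))
              ∪ ((ball x (q : ℝ) \ Good K x) ∪ (ball y (q : ℝ) \ Good K y))) :=
              measure_mono hcover
          _ ≤ volume (Good K x ∩ Good K y ∩ ball c (dist x y))
              + (volume (ball x (q : ℝ) \ Good K x) + volume (ball y (q : ℝ) \ Good K y)) :=
              le_trans (measure_union_le _ _) (by gcongr; exact measure_union_le _ _)
          _ ≤ 0 + (δ * volume (ball x (q : ℝ)) + δ * volume (ball y (q : ℝ))) := by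
              rw [h, measure_empty]
              gcongr
          _ ≤ δ * (3 ^ d * volume (ball c (dist x y)))
              + δ * (3 ^ d * volume (ball c (dist x y))) := by
              rw [zero_add]
              gcongr <;> exact hq3 _
          _ = (8⁻¹ + 8⁻¹) * volume (ball c (dist x y)) := by
              rw [← mul_assoc, hδ3, add_mul]
          _ = 4⁻¹ * volume (ball c (dist x y)) := by
              have h8 : (8 : ℝ≥0∞) = 4 * 2 := by norm_num
              rw [← two_mul, h8, ENNReal.mul_inv (by norm_num) (by norm_num),
                mul_comm ((4 : ℝ≥0∞)⁻¹) _, ← mul_assoc,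
                ENNReal.mul_inv_cancel (by norm_num) (by norm_num), one_mul]
      have ht := ENNReal.toReal_mono (by
          exact ENNReal.mul_ne_top (by norm_num) hvct) hbig
      rw [ENNReal.toReal_mul] at ht
      have h0 : 0 < (volume (ball c (dist x y))).toReal :=
        ENNReal.toReal_pos hvc0 hvct
      norm_num at ht
      linarith
    obtain ⟨z, ⟨⟨hzx, hzy⟩, hzc⟩⟩ := hmain
    obtain ⟨hzE, hzxd⟩ := hzx
    obtain ⟨_, hzyd⟩ := hzy
    rw [mem_ball] at hzc
    have hdzx : dist z x ≤ 3 * dist x y / 2 := by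
      have := dist_triangle z c x
      linarith
    have hdzy : dist z y ≤ 3 * dist x y / 2 := by
      have := dist_triangle z c y
      linarith
    have hxE : x ∈ E := hx.1
    have hyE : y ∈ E := hy.1
    have hnzx : ‖z - x‖ = dist z x := by rw [dist_eq_norm]
    have hnzy : ‖z - y‖ = dist z y := by rw [dist_eq_norm]
    have hKnn : (0 : ℝ) ≤ (K : ℝ) := Nat.cast_nonneg _
    calc dist (f x) (f y) = ‖F x - F y‖ := by
          rw [hFf x hxE, hFf y hyE, dist_eq_norm]
      _ ≤ ‖F x - F z‖ + ‖F z - F y‖ := norm_sub_le_norm_sub_add_norm_sub _ _ _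
      _ = ‖F z - F x‖ + ‖F z - F y‖ := by rw [norm_sub_rev (F x)]
      _ ≤ (K : ℝ) * ‖z - x‖ + (K : ℝ) * ‖z - y‖ := add_le_add hzxd hzyd
      _ ≤ (K : ℝ) * (3 * dist x y / 2) + (K : ℝ) * (3 * dist x y / 2) := by
          rw [hnzx, hnzy]
          gcongr
      _ = 3 * K * dist x y := by ring
  -- assembling the decomposition
  obtain ⟨u, hu⟩ := TopologicalSpace.exists_dense_seq (EuclideanSpace ℝ (Fin n))
  set P : ℕ × ℕ × ℕ → Set (EuclideanSpace ℝ (Fin n)) := fun p =>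
    G p.1 p.2.1 ∩ ball (u p.2.2) (1 / (6 * ((p.2.1 : ℝ) + 1))) with hPdef
  have hPmeas : ∀ p, MeasurableSet (P p) := fun p => (hGmeas _ _).inter measurableSet_ball
  have hPlip : ∀ p : ℕ × ℕ × ℕ, LipschitzOnWith ((3 * p.1 : ℕ) : ℝ≥0) f (P p) := by
    rintro ⟨K, j, i⟩
    apply LipschitzOnWith.of_dist_le_mul
    rintro x ⟨hxG, hxb⟩ y ⟨hyG, hyb⟩
    have hj1 : (0 : ℝ) < (j : ℝ) + 1 := by positivity
    have hdxy : dist x y ≤ 1 / (3 * ((j : ℝ) + 1)) := by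
      rw [mem_ball] at hxb hyb
      have htri := dist_triangle x (u i) y
      have hcomm : dist (u i) y = dist y (u i) := dist_comm _ _
      have h2 : 2 * (1 / (6 * ((j : ℝ) + 1))) = 1 / (3 * ((j : ℝ) + 1)) := by
        field_simp
        ring
      linarith
    have := hLip K j x hxG y hyG hdxy
    calc dist (f x) (f y) ≤ 3 * K * dist x y := this
      _ = ((3 * K : ℕ) : ℝ≥0) * dist x y := by push_cast; ring
  have hPcov : ∀ᵐ a ∂(volume : Measure (EuclideanSpace ℝ (Fin n))),
      a ∈ E → a ∈ ⋃ p, P p := by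
    filter_upwards [hcov] with a ha haE
    obtain ⟨K, j, haG⟩ := ha haE
    have hpos : 0 < 1 / (6 * ((j : ℝ) + 1)) := by positivity
    obtain ⟨i, hi⟩ := hu.exists_dist_lt a hpos
    exact mem_iUnion.mpr ⟨(K, j, i), haG, mem_ball.mpr hi⟩
  set e : ℕ ≃ ℕ × ℕ × ℕ := (Denumerable.eqv (ℕ × ℕ × ℕ)).symm with hedef
  refine ⟨disjointed (fun i => P (e i)), disjoint_disjointed _,
    fun i => MeasurableSet.disjointed (fun k => hPmeas (e k)) i, ?_,
    fun i => ⟨((3 * (e i).1 : ℕ) : ℝ≥0),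
      (hPlip (e i)).mono (disjointed_subset _ i)⟩⟩
  have hUeq : (⋃ i, disjointed (fun k => P (e k)) i) = ⋃ p, P p := by
    rw [iUnion_disjointed]
    exact e.surjective.iUnion_comp P
  rw [hUeq]
  have := ae_iff.mp hPcov
  refine measure_mono_null (fun a ha => ?_) this
  simp only [mem_setOf_eq]
  intro hcontra
  exact ha.2 (hcontra ha.1)
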